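/- arXiv:2405.10337 — 2 statements merged into one kernel-verified Lean document; each statement's English description precedes it below -/
import Mathlib

section
/- For given functions f₁(y,z) and f₂(y,z) in H¹(I×𝕋), the z-average of their product satisfies ‖(f₁f₂)_{(0,0)}‖_{L²(I)} ≤ C‖f₁‖_{L²(I×𝕋)}(‖f₂‖_{L²(I×𝕋)}^{1/2}‖∂_y f₂‖_{L²(I×𝕋)}^{1/2} + ‖f₂‖_{L²(I×𝕋)}) for an absolute constant C. Moreover, if f₂ ∈ H₀¹(I×𝕋) (vanishing at y = ±1), then ‖(f₁f₂)_{(0,0)}‖_{L²(I)} ≤ C‖f₁‖_{L²(I×𝕋)}‖f₂‖_{L²(I×𝕋)}^{1/2}‖∂_y f₂‖_{L²(I×𝕋)}^{1/2}. -/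
open MeasureTheory Real Set

noncomputable section

/-- Points `(y, z)` of the cross-section `I × 𝕋`. -/
abbrev Pt2 := ℝ × ℝ

/-- The cross-section `I × 𝕋` with `I = [-1, 1]` and `𝕋 = [0, 2π)` (up to null sets). -/
def Dom2 : Set Pt2 := Icc (-1:ℝ) 1 ×ˢ Icc (0:ℝ) (2*π)

/-- Partial derivative in `y`. -/
def qy (f : Pt2 → ℝ) (p : Pt2) : ℝ := fderiv ℝ f p (1, 0)
/-- Partial derivative in `z`. -/
def qz (f : Pt2 → ℝ) (p : Pt2) : ℝ := fderiv ℝ f p (0, 1)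
/-- Laplacian on `I × 𝕋`. -/
def lap2 (f : Pt2 → ℝ) (p : Pt2) : ℝ := qy (qy f) p + qz (qz f) p
/-- Length of the gradient. -/
def grad2 (f : Pt2 → ℝ) (p : Pt2) : ℝ := Real.sqrt ((qy f p)^2 + (qz f p)^2)

/-- `L^r` norm over the cross-section. -/
def Lp2 (r : ℝ) (f : Pt2 → ℝ) : ℝ := (∫ q in Dom2, |f q| ^ r) ^ (1/r)

/-- `H¹` norm over the cross-section. -/
def H1n2 (f : Pt2 → ℝ) : ℝ := Lp2 2 f + Lp2 2 (qy f) + Lp2 2 (qz f)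

/-- Periodicity (period `2π`) in `z` for a function on the cross-section. -/
def PerZ2 (f : Pt2 → ℝ) : Prop := ∀ y z : ℝ, f (y, z + 2*π) = f (y, z)

/-- `L²(I)` norm of a function of `y` alone. -/
def L2y (g : ℝ → ℝ) : ℝ := Real.sqrt (∫ y in Icc (-1:ℝ) 1, (g y) ^ 2)

/-- The `z`-average `(f)_{(0,0)}(y) = (1/2π) ∫_𝕋 f(y,z) dz`. -/
def zAvg (f : Pt2 → ℝ) (y : ℝ) : ℝ := (1/(2*π)) * ∫ z in (0:ℝ)..(2*π), f (y, z)


lemma my_sqrt_add_le {x y : ℝ} (hx : 0 ≤ x) (hy : 0 ≤ y) :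
    Real.sqrt (x + y) ≤ Real.sqrt x + Real.sqrt y := by
  have h := Real.sqrt_le_sqrt (show x + y ≤ (Real.sqrt x + Real.sqrt y) ^ 2 by
    rw [add_sq]
    nlinarith [Real.sq_sqrt hx, Real.sq_sqrt hy, Real.sqrt_nonneg x, Real.sqrt_nonneg y])
  rwa [Real.sqrt_sq (by positivity)] at h

lemma my_CS {α : Type*} [MeasurableSpace α] {μ : Measure α} {f g : α → ℝ}
    (hf : AEStronglyMeasurable f μ) (hg : AEStronglyMeasurable g μ)
    (hf2 : Integrable (fun x => f x ^ 2) μ) (hg2 : Integrable (fun x => g x ^ 2) μ) :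
    ∫ x, |f x * g x| ∂μ ≤ Real.sqrt (∫ x, f x ^ 2 ∂μ) * Real.sqrt (∫ x, g x ^ 2 ∂μ) := by
  have hpq : Real.HolderConjugate 2 2 := Real.HolderConjugate.two_two
  have h2 : (ENNReal.ofReal (2:ℝ)) = 2 := by norm_num [ENNReal.ofReal_ofNat]
  have hfm : MemLp (fun x => |f x|) (ENNReal.ofReal (2:ℝ)) μ := by
    rw [h2]
    have := (memLp_two_iff_integrable_sq hf.norm).2 (by simpa [Real.norm_eq_abs, sq_abs] using hf2)
    simpa [Real.norm_eq_abs] using this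
  have hgm : MemLp (fun x => |g x|) (ENNReal.ofReal (2:ℝ)) μ := by
    rw [h2]
    have := (memLp_two_iff_integrable_sq hg.norm).2 (by simpa [Real.norm_eq_abs, sq_abs] using hg2)
    simpa [Real.norm_eq_abs] using this
  have key := integral_mul_le_Lp_mul_Lq_of_nonneg hpq
    (Filter.Eventually.of_forall fun x => abs_nonneg (f x))
    (Filter.Eventually.of_forall fun x => abs_nonneg (g x)) hfm hgm
  have e1 : ∀ x, |f x| ^ (2:ℝ) = f x ^ 2 := fun x => by
    rw [show (2:ℝ) = ((2:ℕ):ℝ) by norm_num, Real.rpow_natCast, sq_abs]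
  have e2 : ∀ x, |g x| ^ (2:ℝ) = g x ^ 2 := fun x => by
    rw [show (2:ℝ) = ((2:ℕ):ℝ) by norm_num, Real.rpow_natCast, sq_abs]
  simp only [e1, e2, abs_mul] at key ⊢
  calc ∫ x, |f x| * |g x| ∂μ ≤ _ := key
  _ = Real.sqrt (∫ x, f x ^ 2 ∂μ) * Real.sqrt (∫ x, g x ^ 2 ∂μ) := by
      rw [Real.sqrt_eq_rpow, Real.sqrt_eq_rpow]

lemma qy_cont {f : Pt2 → ℝ} (hf : ContDiff ℝ 1 f) : Continuous (qy f) :=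
  (hf.continuous_fderiv one_ne_zero).clm_apply continuous_const

lemma hasDerivAt_slice {f : Pt2 → ℝ} (hf : ContDiff ℝ 1 f) (t z : ℝ) :
    HasDerivAt (fun s => f (s, z)) (qy f (t, z)) t := by
  have h1 : HasDerivAt (fun s : ℝ => (s, z)) ((1:ℝ), (0:ℝ)) t :=
    (hasDerivAt_id t).prodMk (hasDerivAt_const t z)
  exact ((hf.differentiable one_ne_zero) (t, z)).hasFDerivAt.comp_hasDerivAt t h1

lemma dom2_compact : IsCompact Dom2 := isCompact_Icc.prod isCompact_Icc

lemma cont_integrableOn_dom2 {h : Pt2 → ℝ} (hc : Continuous h) : IntegrableOn h Dom2 :=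
  hc.locallyIntegrable.integrableOn_isCompact dom2_compact

lemma fubini_dom (h : Pt2 → ℝ) (hc : Continuous h) :
    ∫ q in Dom2, h q = ∫ y in Icc (-1:ℝ) 1, ∫ z in Icc (0:ℝ) (2*π), h (y, z) := by
  have hint : IntegrableOn h Dom2 := cont_integrableOn_dom2 hc
  rw [Dom2] at hint ⊢
  rw [Measure.volume_eq_prod] at hint ⊢
  exact setIntegral_prod h hint

lemma fubini_dom_swap (h : Pt2 → ℝ) (hc : Continuous h) :
    ∫ q in Dom2, h q = ∫ z in Icc (0:ℝ) (2*π), ∫ y in Icc (-1:ℝ) 1, h (y, z) := by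
  rw [fubini_dom h hc]
  have hint : Integrable (Function.uncurry (fun y z => h (y, z)))
      ((volume.restrict (Icc (-1:ℝ) 1)).prod (volume.restrict (Icc (0:ℝ) (2*π)))) := by
    rw [Measure.prod_restrict]
    have := cont_integrableOn_dom2 hc
    rw [Dom2, Measure.volume_eq_prod] at this
    exact this
  exact integral_integral_swap hint

lemma intIcc (g : ℝ → ℝ) : ∫ z in (0:ℝ)..(2*π), g z = ∫ z in Icc (0:ℝ) (2*π), g z := by
  rw [intervalIntegral.integral_of_le (by positivity), integral_Icc_eq_integral_Ioc]

lemma Lp2_two (f : Pt2 → ℝ) : Lp2 2 f = Real.sqrt (∫ q in Dom2, (f q) ^ 2) := by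
  rw [Lp2, Real.sqrt_eq_rpow]
  have : ∫ q in Dom2, |f q| ^ (2:ℝ) = ∫ q in Dom2, (f q) ^ 2 := by
    refine integral_congr_ae (Filter.Eventually.of_forall fun q => ?_)
    show |f q| ^ (2:ℝ) = (f q) ^ 2
    rw [show (2:ℝ) = ((2:ℕ):ℝ) by norm_num, Real.rpow_natCast, sq_abs]
  rw [this]

lemma slice_cont1 {f : Pt2 → ℝ} (hf : Continuous f) (y : ℝ) :
    Continuous (fun z => f (y, z)) := hf.comp (continuous_const.prodMk continuous_id)

lemma slice_cont2 {f : Pt2 → ℝ} (hf : Continuous f) (z : ℝ) :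
    Continuous (fun y => f (y, z)) := hf.comp (continuous_id.prodMk continuous_const)

lemma param_cont {f : Pt2 → ℝ} (hf : Continuous f) :
    Continuous (fun y => ∫ z in (0:ℝ)..(2*π), f (y, z)) := by
  apply intervalIntegral.continuous_parametric_intervalIntegral_of_continuous'
  exact hf.comp (continuous_fst.prodMk continuous_snd)

lemma param_cont_swap {f : Pt2 → ℝ} (hf : Continuous f) :
    Continuous (fun z => ∫ y in (-1:ℝ)..1, f (y, z)) := by
  apply intervalIntegral.continuous_parametric_intervalIntegral_of_continuous'
  exact hf.comp (continuous_snd.prodMk continuous_fst)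

lemma master {f1 f2 : Pt2 → ℝ} (h1 : Continuous f1) (h2 : Continuous f2) {K : ℝ}
    (hK : ∀ y ∈ Icc (-1:ℝ) 1, (∫ z in (0:ℝ)..(2*π), (f2 (y, z))^2) ≤ K) :
    L2y (zAvg (fun q => f1 q * f2 q)) ≤ (1/(2*π)) * Real.sqrt K * Lp2 2 f1 := by
  have pi2 : (0:ℝ) < 2*π := by positivity
  set F1 : ℝ → ℝ := fun y => ∫ z in (0:ℝ)..(2*π), (f1 (y, z))^2 with hF1
  set F2 : ℝ → ℝ := fun y => ∫ z in (0:ℝ)..(2*π), (f2 (y, z))^2 with hF2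
  have hF1nn : ∀ y, 0 ≤ F1 y := fun y =>
    intervalIntegral.integral_nonneg (le_of_lt pi2) (fun z _ => sq_nonneg _)
  have hF2nn : ∀ y, 0 ≤ F2 y := fun y =>
    intervalIntegral.integral_nonneg (le_of_lt pi2) (fun z _ => sq_nonneg _)
  have hK0 : 0 ≤ K := le_trans (hF2nn 1) (hK 1 ⟨by norm_num, le_refl 1⟩)
  set g := zAvg (fun q => f1 q * f2 q) with hgdef
  have hgc : Continuous g := by
    apply continuous_const.mul
    exact param_cont (h1.mul h2)
  have hF1c : Continuous F1 := param_cont (h1.pow 2)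
  -- pointwise bound
  have hpt : ∀ y ∈ Icc (-1:ℝ) 1, g y ^ 2 ≤ (1/(2*π))^2 * K * F1 y := by
    intro y hy
    have hcs : |∫ z in Icc (0:ℝ) (2*π), f1 (y, z) * f2 (y, z)|
        ≤ Real.sqrt (F1 y) * Real.sqrt (F2 y) := by
      have h1' := (slice_cont1 h1 y)
      have h2' := (slice_cont1 h2 y)
      have key := my_CS (μ := volume.restrict (Icc (0:ℝ) (2*π)))
        (f := fun z => f1 (y, z)) (g := fun z => f2 (y, z))
        h1'.aestronglyMeasurable h2'.aestronglyMeasurable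
        ((h1'.pow 2).integrableOn_Icc) ((h2'.pow 2).integrableOn_Icc)
      calc |∫ z in Icc (0:ℝ) (2*π), f1 (y, z) * f2 (y, z)|
          ≤ ∫ z in Icc (0:ℝ) (2*π), |f1 (y, z) * f2 (y, z)| := by
            rw [← Real.norm_eq_abs]
            exact (norm_integral_le_integral_norm _).trans (le_of_eq (by
              refine integral_congr_ae (Filter.Eventually.of_forall fun z => ?_)
              simp [Real.norm_eq_abs, abs_mul]))
        _ ≤ Real.sqrt (F1 y) * Real.sqrt (F2 y) := by
            refine key.trans (le_of_eq ?_)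
            rw [hF1, hF2]
            simp only [intIcc]
    have habs : |g y| ≤ (1/(2*π)) * (Real.sqrt (F1 y) * Real.sqrt (F2 y)) := by
      rw [hgdef]
      show |(1/(2*π)) * ∫ z in (0:ℝ)..(2*π), f1 (y, z) * f2 (y, z)| ≤ _
      rw [abs_mul, abs_of_pos (by positivity : (0:ℝ) < 1/(2*π))]
      apply mul_le_mul_of_nonneg_left _ (by positivity)
      rw [intIcc (fun z => f1 (y, z) * f2 (y, z))]
      exact hcs
    have : g y ^ 2 ≤ ((1/(2*π)) * (Real.sqrt (F1 y) * Real.sqrt (F2 y)))^2 := by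
      rw [← sq_abs]
      exact pow_le_pow_left₀ (abs_nonneg _) habs 2
    refine this.trans ?_
    rw [mul_pow, mul_pow, Real.sq_sqrt (hF1nn y), Real.sq_sqrt (hF2nn y)]
    have := mul_le_mul_of_nonneg_left (hK y hy) (hF1nn y)
    nlinarith [sq_nonneg (1/(2*π))]
  -- integrate
  have hint : ∫ y in Icc (-1:ℝ) 1, g y ^ 2
      ≤ ∫ y in Icc (-1:ℝ) 1, (1/(2*π))^2 * K * F1 y := by
    refine setIntegral_mono_on ((hgc.pow 2).integrableOn_Icc)
      ((continuous_const.mul hF1c).integrableOn_Icc) measurableSet_Icc hpt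
  have hfub : ∫ y in Icc (-1:ℝ) 1, F1 y = ∫ q in Dom2, (f1 q)^2 := by
    rw [fubini_dom (fun q => f1 q ^ 2) (h1.pow 2)]
    refine setIntegral_congr_ae measurableSet_Icc
      (Filter.Eventually.of_forall fun y _ => ?_)
    rw [hF1]
    exact intIcc _
  have hE1 : (0:ℝ) ≤ ∫ q in Dom2, (f1 q)^2 :=
    setIntegral_nonneg (measurableSet_Icc.prod measurableSet_Icc) fun q _ => sq_nonneg _
  have : ∫ y in Icc (-1:ℝ) 1, g y ^ 2 ≤ (1/(2*π))^2 * K * ∫ q in Dom2, (f1 q)^2 := by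
    refine hint.trans (le_of_eq ?_)
    rw [integral_const_mul, hfub]
  rw [L2y, Lp2_two]
  calc Real.sqrt (∫ y in Icc (-1:ℝ) 1, g y ^ 2)
      ≤ Real.sqrt ((1/(2*π))^2 * K * ∫ q in Dom2, (f1 q)^2) := Real.sqrt_le_sqrt this
    _ = (1/(2*π)) * Real.sqrt K * Real.sqrt (∫ q in Dom2, (f1 q)^2) := by
        rw [Real.sqrt_mul (by positivity), Real.sqrt_mul (sq_nonneg _),
          Real.sqrt_sq (by positivity : (0:ℝ) ≤ 1/(2*π))]

lemma F2_bound {f2 : Pt2 → ℝ} (h2 : ContDiff ℝ 1 f2) {y₀ y : ℝ}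
    (hy₀ : y₀ ∈ Icc (-1:ℝ) 1) (hy : y ∈ Icc (-1:ℝ) 1) :
    (∫ z in (0:ℝ)..(2*π), (f2 (y, z))^2)
      ≤ (∫ z in (0:ℝ)..(2*π), (f2 (y₀, z))^2) + ∫ q in Dom2, |2 * f2 q * qy f2 q| := by
  have pi2 : (0:ℝ) < 2*π := by positivity
  have hc2 : Continuous f2 := h2.continuous
  set φ : Pt2 → ℝ := fun q => 2 * f2 q * qy f2 q with hφ
  have hφc : Continuous φ := (continuous_const.mul hc2).mul (qy_cont h2)
  -- FTC in the y variable, pointwise in z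
  have key : ∀ z : ℝ, (f2 (y, z))^2 = (f2 (y₀, z))^2 + ∫ t in y₀..y, φ (t, z) := by
    intro z
    have hftc := intervalIntegral.integral_eq_sub_of_hasDerivAt
      (f := fun s => (f2 (s, z))^2) (f' := fun t => φ (t, z)) (a := y₀) (b := y)
      (fun t _ => by simpa [Pi.pow_def] using (hasDerivAt_slice h2 t z).pow 2)
      ((slice_cont2 hφc z).intervalIntegrable y₀ y)
    rw [hftc]; ring
  set G : ℝ → ℝ := fun z => ∫ t in y₀..y, φ (t, z) with hG
  set H : ℝ → ℝ := fun z => ∫ t in (-1:ℝ)..1, |φ (t, z)| with hH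
  have hGc : Continuous G := by
    apply intervalIntegral.continuous_parametric_intervalIntegral_of_continuous'
    exact hφc.comp (continuous_snd.prodMk continuous_fst)
  have hHc : Continuous H := by
    apply intervalIntegral.continuous_parametric_intervalIntegral_of_continuous'
    exact hφc.abs.comp (continuous_snd.prodMk continuous_fst)
  have hGH : ∀ z : ℝ, G z ≤ H z := by
    intro z
    have h1 : G z ≤ |G z| := le_abs_self _
    have h2' : |G z| ≤ ∫ t in Set.uIoc y₀ y, |φ (t, z)| := by
      rw [← Real.norm_eq_abs (G z)]
      refine (intervalIntegral.norm_integral_le_integral_norm_uIoc).trans (le_of_eq ?_)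
      refine integral_congr_ae (Filter.Eventually.of_forall fun t => ?_)
      simp [Real.norm_eq_abs]
    have h3 : (∫ t in Set.uIoc y₀ y, |φ (t, z)|) ≤ ∫ t in Icc (-1:ℝ) 1, |φ (t, z)| := by
      refine setIntegral_mono_set ((hφc.abs.comp (continuous_id.prodMk continuous_const)).integrableOn_Icc)
        (Filter.Eventually.of_forall fun t => abs_nonneg _) ?_
      refine HasSubset.Subset.eventuallyLE ?_
      exact uIoc_subset_uIcc.trans (uIcc_subset_Icc hy₀ hy)
    have h4 : (∫ t in Icc (-1:ℝ) 1, |φ (t, z)|) = H z := by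
      rw [hH]
      show _ = ∫ t in (-1:ℝ)..1, |φ (t, z)|
      rw [intervalIntegral.integral_of_le (by norm_num : (-1:ℝ) ≤ 1),
        integral_Icc_eq_integral_Ioc]
    linarith
  have step1 : (∫ z in (0:ℝ)..(2*π), (f2 (y, z))^2)
      = (∫ z in (0:ℝ)..(2*π), (f2 (y₀, z))^2) + ∫ z in (0:ℝ)..(2*π), G z := by
    rw [← intervalIntegral.integral_add (f := fun z => (f2 (y₀, z))^2)
      (((slice_cont1 hc2 y₀).pow 2).intervalIntegrable _ _)
      (hGc.intervalIntegrable _ _)]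
    exact intervalIntegral.integral_congr fun z _ => key z
  have step2 : (∫ z in (0:ℝ)..(2*π), G z) ≤ ∫ z in (0:ℝ)..(2*π), H z :=
    intervalIntegral.integral_mono_on (le_of_lt pi2) (hGc.intervalIntegrable _ _)
      (hHc.intervalIntegrable _ _) (fun z _ => hGH z)
  have step3 : (∫ z in (0:ℝ)..(2*π), H z) = ∫ q in Dom2, |φ q| := by
    rw [intIcc H, fubini_dom_swap _ hφc.abs]
    refine setIntegral_congr_ae measurableSet_Icc
      (Filter.Eventually.of_forall fun z _ => ?_)
    rw [hH]
    show (∫ t in (-1:ℝ)..1, |φ (t, z)|) = _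
    rw [intervalIntegral.integral_of_le (by norm_num : (-1:ℝ) ≤ 1),
      integral_Icc_eq_integral_Ioc]
  rw [step1]
  have : (∫ q in Dom2, |φ q|) = ∫ q in Dom2, |2 * f2 q * qy f2 q| := rfl
  linarith [step2, step3.le, step3.ge]

lemma exists_small_slice {f2 : Pt2 → ℝ} (hc : Continuous f2) :
    ∃ y₀ ∈ Icc (-1:ℝ) 1,
      (∫ z in (0:ℝ)..(2*π), (f2 (y₀, z))^2) ≤ (∫ q in Dom2, (f2 q)^2) / 2 := by
  set F2 : ℝ → ℝ := fun y => ∫ z in (0:ℝ)..(2*π), (f2 (y, z))^2 with hF2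
  have hF2c : Continuous F2 := param_cont (hc.pow 2)
  obtain ⟨y₀, hy₀, hmin⟩ := isCompact_Icc.exists_isMinOn
    (Set.nonempty_Icc.2 (by norm_num : (-1:ℝ) ≤ 1)) hF2c.continuousOn
  refine ⟨y₀, hy₀, ?_⟩
  have hvol : (∫ y in Icc (-1:ℝ) 1, F2 y₀) = 2 * F2 y₀ := by
    rw [setIntegral_const, Real.volume_real_Icc_of_le (by norm_num), show (1:ℝ) - (-1) = 2 by norm_num,
      smul_eq_mul]
  have hmono : (∫ y in Icc (-1:ℝ) 1, F2 y₀) ≤ ∫ y in Icc (-1:ℝ) 1, F2 y := by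
    refine setIntegral_mono_on (integrableOn_const (by
      rw [Real.volume_Icc]; exact ENNReal.ofReal_ne_top))
      (hF2c.integrableOn_Icc) measurableSet_Icc (fun y hy => isMinOn_iff.mp hmin y hy)
  have hfub : (∫ y in Icc (-1:ℝ) 1, F2 y) = ∫ q in Dom2, (f2 q)^2 := by
    rw [fubini_dom (fun q => f2 q ^ 2) (hc.pow 2)]
    refine setIntegral_congr_ae measurableSet_Icc
      (Filter.Eventually.of_forall fun y _ => ?_)
    rw [hF2]
    exact intIcc _
  show F2 y₀ ≤ _
  linarith [hvol ▸ hmono, hfub.le, hfub.ge]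

lemma phi_bound {f2 : Pt2 → ℝ} (h2 : ContDiff ℝ 1 f2) :
    (∫ q in Dom2, |2 * f2 q * qy f2 q|) ≤ 2 * (Lp2 2 f2 * Lp2 2 (qy f2)) := by
  have hc := h2.continuous
  have hqc := qy_cont h2
  have key := my_CS (μ := volume.restrict Dom2) (f := f2) (g := qy f2)
    hc.aestronglyMeasurable hqc.aestronglyMeasurable
    (cont_integrableOn_dom2 (hc.pow 2)) (cont_integrableOn_dom2 (hqc.pow 2))
  rw [Lp2_two, Lp2_two]
  calc ∫ q in Dom2, |2 * f2 q * qy f2 q| = 2 * ∫ q in Dom2, |f2 q * qy f2 q| := by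
        rw [← integral_const_mul]
        refine integral_congr_ae (Filter.Eventually.of_forall fun q => ?_)
        show |2 * f2 q * qy f2 q| = 2 * |f2 q * qy f2 q|
        rw [mul_assoc, abs_mul, abs_two]
    _ ≤ 2 * (Real.sqrt (∫ q in Dom2, (f2 q)^2) * Real.sqrt (∫ q in Dom2, (qy f2 q)^2)) := by
        linarith [key]

/-- Estimate for the `z`-average of a product:
`‖(f₁ f₂)_{(0,0)}‖_{L²(I)} ≤ C ‖f₁‖_{L²} (‖f₂‖_{L²}^{1/2} ‖∂_y f₂‖_{L²}^{1/2} + ‖f₂‖_{L²})`,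
and without the lower-order term if `f₂` vanishes at `y = ±1`. -/
theorem stmt_12 :
    ∃ C : ℝ, 0 < C ∧
    ∀ f1 f2 : Pt2 → ℝ,
      ContDiff ℝ 1 f1 → ContDiff ℝ 1 f2 →
      PerZ2 f1 → PerZ2 f2 →
      (L2y (zAvg (fun q => f1 q * f2 q))
          ≤ C * Lp2 2 f1 * (Real.sqrt (Lp2 2 f2 * Lp2 2 (qy f2)) + Lp2 2 f2)) ∧
      ((∀ z : ℝ, f2 (1, z) = 0 ∧ f2 (-1, z) = 0) →
        L2y (zAvg (fun q => f1 q * f2 q))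
          ≤ C * Lp2 2 f1 * Real.sqrt (Lp2 2 f2 * Lp2 2 (qy f2))) := by
  refine ⟨1, one_pos, fun f1 f2 h1 h2 _ _ => ?_⟩
  have pi2 : (0:ℝ) < 2*π := by positivity
  have hc1 : Continuous f1 := h1.continuous
  have hc2 : Continuous f2 := h2.continuous
  set N1 := Lp2 2 f1 with hN1def
  set N2 := Lp2 2 f2 with hN2def
  set D2 := Lp2 2 (qy f2) with hD2def
  have hN1 : 0 ≤ N1 := by rw [hN1def, Lp2_two]; exact Real.sqrt_nonneg _
  have hN2 : 0 ≤ N2 := by rw [hN2def, Lp2_two]; exact Real.sqrt_nonneg _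
  have hD2 : 0 ≤ D2 := by rw [hD2def, Lp2_two]; exact Real.sqrt_nonneg _
  set B := ∫ q in Dom2, |2 * f2 q * qy f2 q| with hBdef
  have hB : B ≤ 2 * (N2 * D2) := phi_bound h2
  have hB0 : 0 ≤ B :=
    setIntegral_nonneg (show MeasurableSet Dom2 from measurableSet_Icc.prod measurableSet_Icc)
      fun q _ => abs_nonneg _
  have hE2 : (∫ q in Dom2, (f2 q)^2) = N2^2 := by
    have hnn : (0:ℝ) ≤ ∫ q in Dom2, (f2 q)^2 :=
      setIntegral_nonneg (show MeasurableSet Dom2 from measurableSet_Icc.prod measurableSet_Icc)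
        fun q _ => sq_nonneg _
    rw [hN2def, Lp2_two]
    exact (Real.sq_sqrt hnn).symm
  have hs0 : 0 ≤ Real.sqrt (N2 * D2) := Real.sqrt_nonneg _
  have hsqrt2 : Real.sqrt 2 ≤ 2 := by
    have h := Real.sqrt_le_sqrt (show (2:ℝ) ≤ 4 by norm_num)
    rwa [show (4:ℝ) = 2^2 by norm_num, Real.sqrt_sq (by norm_num : (0:ℝ) ≤ 2)] at h
  have hpi : (3:ℝ) < π := Real.pi_gt_three
  constructor
  · -- general estimate
    obtain ⟨y₀, hy₀, hsmall⟩ := exists_small_slice hc2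
    have hK : ∀ y ∈ Icc (-1:ℝ) 1,
        (∫ z in (0:ℝ)..(2*π), (f2 (y, z))^2) ≤ N2^2/2 + 2*(N2*D2) := by
      intro y hy
      have h := F2_bound h2 hy₀ hy
      rw [hE2] at hsmall
      linarith
    have hm := master hc1 hc2 hK
    refine hm.trans ?_
    have hsK : Real.sqrt (N2^2/2 + 2*(N2*D2)) ≤ N2 + Real.sqrt 2 * Real.sqrt (N2 * D2) := by
      have h := my_sqrt_add_le (show (0:ℝ) ≤ N2^2/2 by positivity)
        (show (0:ℝ) ≤ 2*(N2*D2) by positivity)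
      have e1 : Real.sqrt (N2^2/2) ≤ N2 := by
        have h' := Real.sqrt_le_sqrt (show N2^2/2 ≤ N2^2 by nlinarith)
        rwa [Real.sqrt_sq hN2] at h'
      have e2 : Real.sqrt (2*(N2*D2)) = Real.sqrt 2 * Real.sqrt (N2*D2) :=
        Real.sqrt_mul (by norm_num) _
      linarith [e2.le, e2.ge]
    have hfinal : Real.sqrt (N2^2/2 + 2*(N2*D2))
        ≤ 2*π*(Real.sqrt (N2 * D2) + N2) := by nlinarith
    have hmul := mul_le_mul_of_nonneg_right
      (mul_le_mul_of_nonneg_left hfinal (by positivity : (0:ℝ) ≤ 1/(2*π))) hN1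
    refine hmul.trans (le_of_eq ?_)
    field_simp
  · -- boundary case
    intro hz
    have hF21 : (∫ z in (0:ℝ)..(2*π), (f2 ((1:ℝ), z))^2) = 0 := by
      rw [show (fun z => (f2 ((1:ℝ), z))^2) = fun _ => (0:ℝ) by
        funext z; rw [(hz z).1]; ring]
      simp
    have hK : ∀ y ∈ Icc (-1:ℝ) 1,
        (∫ z in (0:ℝ)..(2*π), (f2 (y, z))^2) ≤ 2*(N2*D2) := by
      intro y hy
      have h := F2_bound h2 (show (1:ℝ) ∈ Icc (-1:ℝ) 1 by norm_num) hy
      rw [hF21] at h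
      linarith
    have hm := master hc1 hc2 hK
    refine hm.trans ?_
    have e2 : Real.sqrt (2*(N2*D2)) = Real.sqrt 2 * Real.sqrt (N2*D2) :=
      Real.sqrt_mul (by norm_num) _
    have hfinal : Real.sqrt (2*(N2*D2)) ≤ 2*π*Real.sqrt (N2 * D2) := by
      rw [e2]; nlinarith
    have hmul := mul_le_mul_of_nonneg_right
      (mul_le_mul_of_nonneg_left hfinal (by positivity : (0:ℝ) ≤ 1/(2*π))) hN1
    refine hmul.trans (le_of_eq ?_)
    field_simp
end
end

section
/- Let g(y,z) be a function on I×𝕋 with g ∈ H¹(I×𝕋), g(±1,·) = 0, and ∫_𝕋 g(y,z) dz = 0 for every y ∈ I. Then ‖g‖³_{L³(I×𝕋)} ≤ (9/4)‖g‖_{L¹(I×𝕋)}‖∇g‖²_{L²(I×𝕋)}. -/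
open MeasureTheory Real Set

noncomputable section

section Aux
open intervalIntegral Filter


variable {g : Pt2 → ℝ}

lemma cont_qy (hg : ContDiff ℝ 1 g) : Continuous (qy g) :=
  (hg.continuous_fderiv one_ne_zero).clm_apply continuous_const

lemma cont_qz (hg : ContDiff ℝ 1 g) : Continuous (qz g) :=
  (hg.continuous_fderiv one_ne_zero).clm_apply continuous_const

lemma abs_qy_le_grad (p : Pt2) : |qy g p| ≤ grad2 g p := by
  rw [grad2, ← Real.sqrt_sq_eq_abs]
  exact Real.sqrt_le_sqrt (by nlinarith [sq_nonneg (qz g p)])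

lemma abs_qz_le_grad (p : Pt2) : |qz g p| ≤ grad2 g p := by
  rw [grad2, ← Real.sqrt_sq_eq_abs]
  exact Real.sqrt_le_sqrt (by nlinarith [sq_nonneg (qy g p)])

lemma grad_nonneg (p : Pt2) : 0 ≤ grad2 g p := Real.sqrt_nonneg _

/-- hasDerivAt of y ↦ g (y, z) -/
lemma hasDerivAt_y (hg : ContDiff ℝ 1 g) (y z : ℝ) :
    HasDerivAt (fun t => g (t, z)) (qy g (y, z)) y := by
  have h1 : HasDerivAt (fun t : ℝ => (t, z)) ((1:ℝ), (0:ℝ)) y :=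
    (hasDerivAt_id y).prodMk (hasDerivAt_const y z)
  have h2 : HasFDerivAt g (fderiv ℝ g (y, z)) (y, z) :=
    (hg.differentiable one_ne_zero (y, z)).hasFDerivAt
  exact h2.comp_hasDerivAt y h1

lemma hasDerivAt_z (hg : ContDiff ℝ 1 g) (y z : ℝ) :
    HasDerivAt (fun s => g (y, s)) (qz g (y, z)) z := by
  have h1 : HasDerivAt (fun s : ℝ => (y, s)) ((0:ℝ), (1:ℝ)) z :=
    (hasDerivAt_const z y).prodMk (hasDerivAt_id z)
  have h2 : HasFDerivAt g (fderiv ℝ g (y, z)) (y, z) :=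
    (hg.differentiable one_ne_zero (y, z)).hasFDerivAt
  exact h2.comp_hasDerivAt z h1

section Phi
def phi (a t : ℝ) : ℝ := (t^2 + a) ^ (3/4 : ℝ)
def phi' (a t : ℝ) : ℝ := (3/2) * t * (t^2 + a) ^ (-(1/4) : ℝ)

variable {a : ℝ} (ha : 0 < a)
include ha

lemma base_pos (t : ℝ) : 0 < t^2 + a := by positivity

lemma phi_hasDerivAt (t : ℝ) : HasDerivAt (phi a) (phi' a t) t := by
  have h1 : HasDerivAt (fun t : ℝ => t^2 + a) (2*t) t := by
    simpa using ((hasDerivAt_pow 2 t).add_const a)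
  have h2 := (Real.hasDerivAt_rpow_const (p := (3/4:ℝ)) (Or.inl (base_pos ha t).ne'))
  have h : HasDerivAt (phi a) (3/4 * (t^2 + a) ^ ((3/4:ℝ) - 1) * (2*t)) t := by
    have h' := h2.comp t h1; exact h'
  convert h using 1
  rw [phi']
  have : (3/4 : ℝ) - 1 = -(1/4) := by norm_num
  rw [this]; ring

lemma phi_cont : Continuous (phi a) :=
  (continuous_pow 2 |>.add continuous_const).rpow_const fun t => Or.inl (base_pos ha t).ne'

lemma phi'_cont : Continuous (phi' a) := by
  apply (continuous_const.mul continuous_id).mul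
  exact (continuous_pow 2 |>.add continuous_const).rpow_const fun t => Or.inl (base_pos ha t).ne'

lemma phi_nonneg (t : ℝ) : 0 ≤ phi a t := Real.rpow_nonneg (base_pos ha t).le _

omit ha in lemma phi_zero : phi a 0 = a ^ (3/4 : ℝ) := by simp [phi]

lemma abs_rpow_le_phi (t : ℝ) : |t| ^ (3/2 : ℝ) ≤ phi a t := by
  have h1 : |t| ^ (3/2 : ℝ) = (t^2) ^ (3/4 : ℝ) := by
    rw [show (t:ℝ)^2 = |t|^(2:ℕ) from (sq_abs t).symm, ← Real.rpow_natCast |t| 2,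
      ← Real.rpow_mul (abs_nonneg t)]
    norm_num
  rw [h1, phi]
  exact Real.rpow_le_rpow (sq_nonneg t) (by linarith) (by norm_num)

lemma phi'_bound (t : ℝ) : |phi' a t| ≤ (3/2) * |t| ^ (1/2 : ℝ) := by
  rw [phi', abs_mul, abs_mul]
  rcases eq_or_ne t 0 with rfl | ht
  · simp
  · have hpos : 0 < |t| := abs_pos.mpr ht
    have h1 : |(t^2 + a) ^ (-(1/4):ℝ)| = (t^2 + a) ^ (-(1/4):ℝ) :=
      abs_of_nonneg (Real.rpow_nonneg (base_pos ha t).le _)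
    rw [h1]
    have h2 : (t^2 + a) ^ (-(1/4):ℝ) ≤ (t^2) ^ (-(1/4):ℝ) :=
      Real.rpow_le_rpow_of_nonpos (by positivity) (by linarith) (by norm_num)
    have h3 : (t^2) ^ (-(1/4):ℝ) = |t| ^ (-(1/2):ℝ) := by
      rw [show (t:ℝ)^2 = |t|^(2:ℕ) from (sq_abs t).symm, ← Real.rpow_natCast |t| 2,
        ← Real.rpow_mul (abs_nonneg t)]
      norm_num
    have h4 : |t| * |t| ^ (-(1/2):ℝ) = |t| ^ (1/2:ℝ) := by
      nth_rewrite 1 [← Real.rpow_one |t|]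
      rw [← Real.rpow_add hpos]; norm_num
    calc |(3/2 : ℝ)| * |t| * (t^2+a)^(-(1/4):ℝ) ≤ (3/2) * |t| * |t| ^ (-(1/2):ℝ) := by
          rw [abs_of_nonneg (by norm_num : (0:ℝ) ≤ 3/2)]
          exact mul_le_mul_of_nonneg_left (h2.trans_eq h3) (by positivity)
      _ = (3/2) * |t| ^ (1/2:ℝ) := by rw [mul_assoc, h4]

end Phi

lemma ftc_bound {u d : ℝ → ℝ} (hd : ∀ t, HasDerivAt u (d t) t) (hc : Continuous d)
    {α β c x : ℝ} (hc1 : c ∈ Icc α β) (hx : x ∈ Icc α β) (huc : u c = 0) :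
    u x ≤ ∫ t in α..β, |d t| := by
  have hux : u x = ∫ t in c..x, d t := by
    rw [intervalIntegral.integral_eq_sub_of_hasDerivAt (fun t _ => hd t)
      (hc.intervalIntegrable c x), huc, sub_zero]
  have hmono : ∀ x1 x2 : ℝ, α ≤ x1 → x1 ≤ x2 → x2 ≤ β →
      (∫ t in x1..x2, |d t|) ≤ ∫ t in α..β, |d t| :=
    fun x1 x2 h1 h2 h3 => intervalIntegral.integral_mono_interval h1 h2 h3
      (Filter.Eventually.of_forall fun t => abs_nonneg _) (hc.abs.intervalIntegrable α β)
  rcases le_total c x with h | h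
  · calc u x ≤ |∫ t in c..x, d t| := hux ▸ le_abs_self _
      _ ≤ ∫ t in c..x, |d t| := intervalIntegral.abs_integral_le_integral_abs h
      _ ≤ _ := hmono c x hc1.1 h hx.2
  · have : u x = -(∫ t in x..c, d t) := by rw [hux, intervalIntegral.integral_symm]
    calc u x ≤ |∫ t in x..c, d t| := by rw [this]; exact neg_le_abs _
      _ ≤ ∫ t in x..c, |d t| := intervalIntegral.abs_integral_le_integral_abs h
      _ ≤ _ := hmono x c hx.1 h hc1.2

/-- a continuous function with zero integral has a zero -/
lemma exists_zero_of_integral_zero {v : ℝ → ℝ} (hv : Continuous v) {α β : ℝ} (hαβ : α < β)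
    (hint : (∫ t in α..β, v t) = 0) : ∃ c ∈ Icc α β, v c = 0 := by
  by_contra h
  push_neg at h
  have hIvt : (∀ t ∈ Icc α β, 0 < v t) ∨ (∀ t ∈ Icc α β, v t < 0) := by
    by_contra hcon
    push_neg at hcon
    obtain ⟨⟨t1, ht1, ht1'⟩, ⟨t2, ht2, ht2'⟩⟩ := hcon
    have h1 : v t1 < 0 := lt_of_le_of_ne ht1' (h t1 ht1)
    have h2 : 0 < v t2 := lt_of_le_of_ne ht2' (Ne.symm (h t2 ht2))
    obtain ⟨c, hc, hvc⟩ := intermediate_value_uIcc (a := t1) (b := t2)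
      (hv.continuousOn) (show (0:ℝ) ∈ uIcc (v t1) (v t2) by
        rw [mem_uIcc]; left; exact ⟨h1.le, h2.le⟩)
    have : c ∈ Icc α β := uIcc_subset_Icc ht1 ht2 hc
    exact h c this hvc
  rcases hIvt with hpos | hneg
  · have : 0 < ∫ t in α..β, v t :=
      intervalIntegral.intervalIntegral_pos_of_pos_on (hv.intervalIntegrable α β)
        (fun t ht => hpos t ⟨ht.1.le, ht.2.le⟩) hαβ
    exact this.ne' hint
  · have : 0 < ∫ t in α..β, -v t :=
      intervalIntegral.intervalIntegral_pos_of_pos_on ((hv.neg).intervalIntegrable α β)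
        (fun t ht => neg_pos.mpr (hneg t ⟨ht.1.le, ht.2.le⟩)) hαβ
    rw [intervalIntegral.integral_neg, hint, neg_zero] at this
    exact this.ne rfl


/-- Cauchy–Schwarz for continuous functions on a restricted-to-compact measure. -/
lemma cs_step {α : Type*} [MeasurableSpace α] {μ : Measure α} [IsFiniteMeasure μ] {f h : α → ℝ}
    (hf : AEStronglyMeasurable f μ) (hh : AEStronglyMeasurable h μ)
    (Cf Ch : ℝ) (hbf : ∀ᵐ x ∂μ, ‖f x‖ ≤ Cf) (hbh : ∀ᵐ x ∂μ, ‖h x‖ ≤ Ch)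
    (hf0 : ∀ x, 0 ≤ f x) (hh0 : ∀ x, 0 ≤ h x) :
    ∫ x, f x * h x ∂μ ≤ (∫ x, f x ^ (2:ℝ) ∂μ) ^ (1/2:ℝ) * (∫ x, h x ^ (2:ℝ) ∂μ) ^ (1/2:ℝ) := by
  have hpq : Real.HolderConjugate 2 2 := Real.HolderConjugate.two_two
  have hmf : MemLp f (ENNReal.ofReal 2) μ := MemLp.of_bound hf Cf hbf
  have hmh : MemLp h (ENNReal.ofReal 2) μ := MemLp.of_bound hh Ch hbh
  exact integral_mul_le_Lp_mul_Lq_of_nonneg hpq (Eventually.of_forall hf0)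
    (Eventually.of_forall hh0) hmf hmh


def SS (g : Pt2 → ℝ) : ℝ :=
  (3/2) * ((∫ p in Dom2, |g p|) ^ (1/2:ℝ) * (∫ p in Dom2, (grad2 g p)^2) ^ (1/2:ℝ))

lemma key (g : Pt2 → ℝ) (hg : ContDiff ℝ 1 g)
    (hb : ∀ z : ℝ, g (1, z) = 0 ∧ g (-1, z) = 0)
    (hm : ∀ y : ℝ, (∫ z in (0:ℝ)..(2*π), g (y, z)) = 0)
    {a : ℝ} (ha : 0 < a) :
    (∫ p in Dom2, |g p|^(3:ℕ)) ≤ (2*π*a^(3/4:ℝ) + SS g) * (2*a^(3/4:ℝ) + SS g) := by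
  have hgc : Continuous g := hg.continuous
  set k : ℝ := a ^ (3/4:ℝ) with hk
  have hk0 : 0 < k := Real.rpow_pos_of_pos ha _
  set μy : Measure ℝ := volume.restrict (Icc (-1:ℝ) 1) with hμy
  set μz : Measure ℝ := volume.restrict (Icc (0:ℝ) (2*π)) with hμz
  set ν : Measure Pt2 := μy.prod μz with hν
  haveI : IsFiniteMeasure μy := by
    constructor; rw [hμy, Measure.restrict_apply_univ, Real.volume_Icc]; exact ENNReal.ofReal_lt_top
  haveI : IsFiniteMeasure μz := by
    constructor; rw [hμz, Measure.restrict_apply_univ, Real.volume_Icc]; exact ENNReal.ofReal_lt_top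
  have hrestrict : volume.restrict Dom2 = ν := by
    rw [Dom2, Measure.volume_eq_prod, ← Measure.prod_restrict, hν, hμy, hμz]
  have hDomC : IsCompact Dom2 := isCompact_Icc.prod isCompact_Icc
  have hInt : ∀ f : Pt2 → ℝ, Continuous f → Integrable f ν := fun f hf => by
    rw [← hrestrict]; exact hf.continuousOn.integrableOn_compact hDomC
  -- derivative integrands
  set Dy : Pt2 → ℝ := fun p => phi' a (g p) * qy g p with hDy
  set Dz : Pt2 → ℝ := fun p => phi' a (g p) * qz g p with hDz
  have hDyc : Continuous Dy := ((phi'_cont ha).comp hgc).mul (cont_qy hg)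
  have hDzc : Continuous Dz := ((phi'_cont ha).comp hgc).mul (cont_qz hg)
  set A : ℝ → ℝ := fun z => ∫ t in (-1:ℝ)..1, |Dy (t, z)| with hA
  set B : ℝ → ℝ := fun y => ∫ s in (0:ℝ)..(2*π), |Dz (y, s)| with hB
  have hA0 : ∀ z, 0 ≤ A z := fun z =>
    intervalIntegral.integral_nonneg (by norm_num) (fun t _ => abs_nonneg _)
  have hB0 : ∀ y, 0 ≤ B y := fun y =>
    intervalIntegral.integral_nonneg (by positivity) (fun s _ => abs_nonneg _)
  -- pointwise bounds from FTC
  have hky : ∀ z : ℝ, ∀ y ∈ Icc (-1:ℝ) 1, phi a (g (y, z)) ≤ k + A z := by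
    intro z y hy
    have hd : ∀ t, HasDerivAt (fun t => phi a (g (t, z)) - k) (Dy (t, z)) t := fun t =>
      by have h' := (phi_hasDerivAt ha (g (t, z))).comp t (hasDerivAt_y hg t z); exact h'.sub_const k
    have hdc : Continuous fun t => Dy (t, z) :=
      hDyc.comp (continuous_id.prodMk continuous_const)
    have h1 : phi a (g (1, z)) - k = 0 := by rw [(hb z).1, phi_zero, hk, sub_self]
    have := ftc_bound hd hdc (c := 1) (x := y)
      ⟨by norm_num, le_rfl⟩ hy h1
    simp only [hA]; linarith
  have hkz : ∀ y : ℝ, ∀ z ∈ Icc (0:ℝ) (2*π), phi a (g (y, z)) ≤ k + B y := by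
    intro y z hz
    obtain ⟨c, hc, hgc0⟩ := exists_zero_of_integral_zero
      (hgc.comp (continuous_const.prodMk continuous_id)) (by positivity) (hm y)
    have hd : ∀ s, HasDerivAt (fun s => phi a (g (y, s)) - k) (Dz (y, s)) s := fun s =>
      by have h' := (phi_hasDerivAt ha (g (y, s))).comp s (hasDerivAt_z hg y s); exact h'.sub_const k
    have hdc : Continuous fun s => Dz (y, s) :=
      hDzc.comp (continuous_const.prodMk continuous_id)
    have h1 : phi a (g (y, c)) - k = 0 := by rw [show g (y, c) = 0 from hgc0, phi_zero, hk, sub_self]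
    have := ftc_bound hd hdc hc hz h1
    simp only [hB]; linarith
  have hpt : ∀ y ∈ Icc (-1:ℝ) 1, ∀ z ∈ Icc (0:ℝ) (2*π),
      |g (y, z)| ^ (3:ℕ) ≤ (k + A z) * (k + B y) := by
    intro y hy z hz
    have h32 : |g (y, z)| ^ (3:ℕ) = (|g (y, z)| ^ (3/2:ℝ)) ^ (2:ℕ) := by
      rw [← Real.rpow_natCast (|g (y, z)| ^ (3/2:ℝ)) 2, ← Real.rpow_mul (abs_nonneg _),
        ← Real.rpow_natCast |g (y, z)| 3]
      norm_num
    have hphi := abs_rpow_le_phi ha (g (y, z))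
    have h0 : (0:ℝ) ≤ |g (y, z)| ^ (3/2:ℝ) := Real.rpow_nonneg (abs_nonneg _) _
    have hP := hphi.trans (hky z y hy)
    have hQ := hphi.trans (hkz y z hz)
    rw [h32, sq]
    exact mul_le_mul hP hQ h0 (h0.trans hP)
  -- integrability facts
  have hg3int : Integrable (fun p => |g p| ^ (3:ℕ)) ν := hInt _ ((hgc.abs).pow 3)
  have hDyint : Integrable (fun p => |Dy p|) ν := hInt _ hDyc.abs
  have hDzint : Integrable (fun p => |Dz p|) ν := hInt _ hDzc.abs
  have hAeq : ∀ z, A z = ∫ t, |Dy (t, z)| ∂μy := fun z => by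
    simp only [hA]
    rw [intervalIntegral.integral_of_le (by norm_num : (-1:ℝ) ≤ 1),
      ← MeasureTheory.integral_Icc_eq_integral_Ioc, hμy]
  have hBeq : ∀ y, B y = ∫ s, |Dz (y, s)| ∂μz := fun y => by
    simp only [hB]
    rw [intervalIntegral.integral_of_le (by positivity : (0:ℝ) ≤ 2*π),
      ← MeasureTheory.integral_Icc_eq_integral_Ioc, hμz]
  have hAint : Integrable A μz :=
    (hDyint.integral_prod_right).congr (Eventually.of_forall fun z => (hAeq z).symm)
  have hBint : Integrable B μy :=
    (hDzint.integral_prod_left).congr (Eventually.of_forall fun y => (hBeq y).symm)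
    -- step 1 : Fubini for the main integrand
  have hstep1 : (∫ p in Dom2, |g p| ^ (3:ℕ)) = ∫ y, ∫ z, |g (y, z)| ^ (3:ℕ) ∂μz ∂μy := by
    rw [hrestrict]; exact integral_prod _ hg3int
  -- step 2 : inner bound
  have hInner : ∀ y ∈ Icc (-1:ℝ) 1,
      (∫ z, |g (y, z)| ^ (3:ℕ) ∂μz) ≤ (∫ z, (k + A z) ∂μz) * (k + B y) := by
    intro y hy
    have hint1 : Integrable (fun z => |g (y, z)| ^ (3:ℕ)) μz := by
      rw [hμz]
      exact ((hgc.comp (continuous_const.prodMk continuous_id)).abs.pow 3).continuousOn.integrableOn_compact isCompact_Icc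
    have hint2 : Integrable (fun z => (k + A z) * (k + B y)) μz :=
      ((integrable_const k).add hAint).mul_const _
    have h1 : (∫ z, |g (y, z)| ^ (3:ℕ) ∂μz) ≤ ∫ z, (k + A z) * (k + B y) ∂μz := by
      rw [hμz] at hint1 hint2 ⊢
      exact setIntegral_mono_on hint1 hint2 measurableSet_Icc (fun z hz => hpt y hy z hz)
    rwa [MeasureTheory.integral_mul_const] at h1
  -- step 3 : outer bound
  have houter : (∫ y, ∫ z, |g (y, z)| ^ (3:ℕ) ∂μz ∂μy)
      ≤ (∫ z, (k + A z) ∂μz) * (∫ y, (k + B y) ∂μy) := by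
    have hint1 : Integrable (fun y => ∫ z, |g (y, z)| ^ (3:ℕ) ∂μz) μy :=
      hg3int.integral_prod_left
    have hint2 : Integrable (fun y => (∫ z, (k + A z) ∂μz) * (k + B y)) μy :=
      (((integrable_const k).add hBint).const_mul _)
    have h1 : (∫ y, ∫ z, |g (y, z)| ^ (3:ℕ) ∂μz ∂μy)
        ≤ ∫ y, (∫ z, (k + A z) ∂μz) * (k + B y) ∂μy := by
      rw [hμy] at hint1 hint2 ⊢
      exact setIntegral_mono_on hint1 hint2 measurableSet_Icc hInner
    rwa [MeasureTheory.integral_const_mul] at h1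
  -- constants
  have hCA : (∫ z, (k + A z) ∂μz) = 2*π*k + ∫ z, A z ∂μz := by
    rw [integral_add (integrable_const k) hAint]
    congr 1
    rw [MeasureTheory.integral_const, measureReal_def, hμz, Measure.restrict_apply_univ, Real.volume_Icc,
      smul_eq_mul, ENNReal.toReal_ofReal (by simp; positivity : (0:ℝ) ≤ 2*π - 0)]
    ring
  have hCB : (∫ y, (k + B y) ∂μy) = 2*k + ∫ y, B y ∂μy := by
    rw [integral_add (integrable_const k) hBint]
    congr 1
    rw [MeasureTheory.integral_const, measureReal_def, hμy, Measure.restrict_apply_univ, Real.volume_Icc,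
      smul_eq_mul, ENNReal.toReal_ofReal (by norm_num : (0:ℝ) ≤ 1 - (-1))]
    norm_num
  -- identify the A,B integrals with double integrals
  have hIA : (∫ z, A z ∂μz) = ∫ p, |Dy p| ∂ν := by
    calc (∫ z, A z ∂μz) = ∫ z, ∫ t, |Dy (t, z)| ∂μy ∂μz :=
          integral_congr_ae (Eventually.of_forall fun z => hAeq z)
      _ = ∫ t, ∫ z, |Dy (t, z)| ∂μz ∂μy := (integral_integral_swap hDyint).symm
      _ = ∫ p, |Dy p| ∂ν := (integral_prod _ hDyint).symm
  have hIB : (∫ y, B y ∂μy) = ∫ p, |Dz p| ∂ν := by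
    calc (∫ y, B y ∂μy) = ∫ y, ∫ s, |Dz (y, s)| ∂μz ∂μy :=
          integral_congr_ae (Eventually.of_forall fun y => hBeq y)
      _ = ∫ p, |Dz p| ∂ν := (integral_prod _ hDzint).symm
  -- Cauchy–Schwarz bound
  have hgr : Continuous (grad2 g) :=
    Real.continuous_sqrt.comp (((cont_qy hg).pow 2).add ((cont_qz hg).pow 2))
  have hsq : Continuous fun p : Pt2 => |g p| ^ (1/2:ℝ) :=
    hgc.abs.rpow_const (fun p => Or.inr (by norm_num))
  have hCS : ∀ D : Pt2 → ℝ, Continuous D →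
      (∀ p, |D p| ≤ (3/2) * |g p| ^ (1/2:ℝ) * grad2 g p) → (∫ p, |D p| ∂ν) ≤ SS g := by
    intro D hDc hDb
    have h1 : (∫ p, |D p| ∂ν) ≤ ∫ p, (3/2) * (|g p| ^ (1/2:ℝ) * grad2 g p) ∂ν := by
      refine integral_mono (hInt _ hDc.abs) ((hInt _ (hsq.mul hgr)).const_mul _) ?_
      intro p
      show |D p| ≤ 3/2 * (|g p| ^ (1/2:ℝ) * grad2 g p)
      rw [← mul_assoc]
      exact hDb p
    obtain ⟨Cf, hCf⟩ := hDomC.exists_bound_of_continuousOn hsq.continuousOn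
    obtain ⟨Ch, hCh⟩ := hDomC.exists_bound_of_continuousOn hgr.continuousOn
    have hae : ∀ᵐ p ∂ν, p ∈ Dom2 := by
      rw [← hrestrict]
      exact ae_restrict_mem (measurableSet_Icc.prod measurableSet_Icc)
    have h2 := cs_step (μ := ν) hsq.aestronglyMeasurable hgr.aestronglyMeasurable Cf Ch
      (hae.mono fun p hp => hCf p hp) (hae.mono fun p hp => hCh p hp)
      (fun p => Real.rpow_nonneg (abs_nonneg _) _) (fun p => Real.sqrt_nonneg _)
    have e1 : (∫ p, (|g p| ^ (1/2:ℝ)) ^ (2:ℝ) ∂ν) = ∫ p, |g p| ∂ν := by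
      refine integral_congr_ae (Eventually.of_forall fun p => ?_)
      show (|g p| ^ (1/2:ℝ)) ^ (2:ℝ) = |g p|
      rw [← Real.rpow_mul (abs_nonneg _)]
      norm_num
    have e2 : (∫ p, (grad2 g p) ^ (2:ℝ) ∂ν) = ∫ p, (grad2 g p) ^ (2:ℕ) ∂ν := by
      refine integral_congr_ae (Eventually.of_forall fun p => ?_)
      show (grad2 g p) ^ (2:ℝ) = (grad2 g p) ^ (2:ℕ)
      rw [← Real.rpow_natCast (grad2 g p) 2]
      norm_num
    rw [e1, e2] at h2
    calc (∫ p, |D p| ∂ν) ≤ ∫ p, (3/2) * (|g p| ^ (1/2:ℝ) * grad2 g p) ∂ν := h1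
      _ = (3/2) * ∫ p, |g p| ^ (1/2:ℝ) * grad2 g p ∂ν := integral_const_mul _ _
      _ ≤ (3/2) * ((∫ p, |g p| ∂ν) ^ (1/2:ℝ) * (∫ p, (grad2 g p) ^ (2:ℕ) ∂ν) ^ (1/2:ℝ)) := by
          exact mul_le_mul_of_nonneg_left h2 (by norm_num : (0:ℝ) ≤ 3/2)
      _ = SS g := by rw [SS, hrestrict]
  have hDyb : ∀ p, |Dy p| ≤ (3/2) * |g p| ^ (1/2:ℝ) * grad2 g p := by
    intro p
    rw [show Dy p = phi' a (g p) * qy g p from rfl, abs_mul]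
    exact mul_le_mul (phi'_bound ha _) (abs_qy_le_grad p) (abs_nonneg _) (by positivity)
  have hDzb : ∀ p, |Dz p| ≤ (3/2) * |g p| ^ (1/2:ℝ) * grad2 g p := by
    intro p
    rw [show Dz p = phi' a (g p) * qz g p from rfl, abs_mul]
    exact mul_le_mul (phi'_bound ha _) (abs_qz_le_grad p) (abs_nonneg _) (by positivity)
  have hSA : (∫ z, A z ∂μz) ≤ SS g := hIA ▸ hCS Dy hDyc hDyb
  have hSB : (∫ y, B y ∂μy) ≤ SS g := hIB ▸ hCS Dz hDzc hDzb
  have hA0' : 0 ≤ ∫ z, A z ∂μz := integral_nonneg hA0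
  have hB0' : 0 ≤ ∫ y, B y ∂μy := integral_nonneg hB0
  have hS0 : 0 ≤ SS g := hB0'.trans hSB
  have hπ : (0:ℝ) < π := Real.pi_pos
  calc (∫ p in Dom2, |g p| ^ (3:ℕ))
      = ∫ y, ∫ z, |g (y, z)| ^ (3:ℕ) ∂μz ∂μy := hstep1
    _ ≤ (∫ z, (k + A z) ∂μz) * (∫ y, (k + B y) ∂μy) := houter
    _ = (2*π*k + ∫ z, A z ∂μz) * (2*k + ∫ y, B y ∂μy) := by rw [hCA, hCB]
    _ ≤ (2*π*k + SS g) * (2*k + SS g) := by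
        apply mul_le_mul (by linarith) (by linarith) (by positivity) (by positivity)



end Aux

/-- Explicit-constant Sobolev inequality: for `g ∈ H¹(I × 𝕋)` vanishing at `y = ±1`
and with zero `z`-average, `‖g‖³_{L³} ≤ (9/4) ‖g‖_{L¹} ‖∇g‖²_{L²}`. -/
theorem stmt_14 :
    ∀ g : Pt2 → ℝ,
      ContDiff ℝ 1 g → PerZ2 g →
      (∀ z : ℝ, g (1, z) = 0 ∧ g (-1, z) = 0) →
      (∀ y : ℝ, (∫ z in (0:ℝ)..(2*π), g (y, z)) = 0) →
      (Lp2 3 g) ^ 3 ≤ 9/4 * Lp2 1 g * (Lp2 2 (grad2 g)) ^ 2 := by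
  intro g hg _hper hb hm
  set L1 : ℝ := ∫ p in Dom2, |g p| with hL1
  set N2 : ℝ := ∫ p in Dom2, (grad2 g p)^2 with hN2
  have hL10 : 0 ≤ L1 := integral_nonneg fun p => abs_nonneg _
  have hN20 : 0 ≤ N2 := integral_nonneg fun p => sq_nonneg _
  -- identify LHS
  have h3 : (Lp2 3 g) ^ 3 = ∫ p in Dom2, |g p| ^ (3:ℕ) := by
    rw [Lp2]
    have hI : 0 ≤ ∫ q in Dom2, |g q| ^ (3:ℝ) :=
      integral_nonneg fun q => Real.rpow_nonneg (abs_nonneg _) _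
    rw [← Real.rpow_natCast ((∫ q in Dom2, |g q| ^ (3:ℝ)) ^ ((1:ℝ)/3)) 3,
      ← Real.rpow_mul hI]
    norm_num
  -- identify RHS
  have h1 : Lp2 1 g = L1 := by
    simp [Lp2, Real.rpow_one, hL1]
  have h2 : (Lp2 2 (grad2 g)) ^ 2 = N2 := by
    rw [Lp2]
    have e : (∫ q in Dom2, |grad2 g q| ^ (2:ℝ)) = N2 := by
      rw [hN2]
      refine integral_congr_ae (Filter.Eventually.of_forall fun q => ?_)
      show |grad2 g q| ^ (2:ℝ) = grad2 g q ^ (2:ℕ)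
      rw [show |grad2 g q| = grad2 g q from abs_of_nonneg (Real.sqrt_nonneg _),
        ← Real.rpow_natCast (grad2 g q) 2]
      norm_num
    rw [e, ← Real.rpow_natCast (N2 ^ ((1:ℝ)/2)) 2, ← Real.rpow_mul hN20]
    norm_num
  have hSS : SS g * SS g = 9/4 * L1 * N2 := by
    rw [SS, ← hL1, ← hN2]
    have e1 : L1 ^ (1/2:ℝ) * L1 ^ (1/2:ℝ) = L1 := by
      rw [← Real.rpow_add' hL10 (by norm_num)]
      norm_num
    have e2 : N2 ^ (1/2:ℝ) * N2 ^ (1/2:ℝ) = N2 := by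
      rw [← Real.rpow_add' hN20 (by norm_num)]
      norm_num
    nlinarith [e1, e2]
  -- the limit argument
  have h0 : Filter.Tendsto (fun a : ℝ => a ^ (3/4:ℝ)) (nhdsWithin 0 (Ioi 0)) (nhds 0) := by
    have hc : ContinuousAt (fun a : ℝ => a ^ (3/4:ℝ)) 0 :=
      Real.continuousAt_rpow_const 0 _ (Or.inr (by norm_num))
    have := hc.tendsto
    rw [Real.zero_rpow (by norm_num)] at this
    exact this.mono_left nhdsWithin_le_nhds
  have hlim : Filter.Tendsto
      (fun a : ℝ => (2*π*a^(3/4:ℝ) + SS g) * (2*a^(3/4:ℝ) + SS g))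
      (nhdsWithin 0 (Ioi 0)) (nhds ((2*π*0 + SS g) * (2*0 + SS g))) := by
    exact (((h0.const_mul (2*π)).add tendsto_const_nhds).mul
      ((h0.const_mul 2).add tendsto_const_nhds))
  have hle : (∫ p in Dom2, |g p| ^ (3:ℕ)) ≤ (2*π*0 + SS g) * (2*0 + SS g) :=
    ge_of_tendsto hlim (eventually_mem_nhdsWithin.mono fun a ha => key g hg hb hm ha)
  rw [h3, h1, h2, ← hSS]
  calc (∫ p in Dom2, |g p| ^ (3:ℕ)) ≤ (2*π*0 + SS g) * (2*0 + SS g) := hle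
    _ = SS g * SS g := by ring
end
end
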